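/- Universal approximation by activated MPS on compact sets: let K ⊆ ℝⁿ be a nonempty compact set and let σ : ℝ → ℝ be continuous and bounded with σ(t) → 0 as t → −∞ and σ(t) → C as t → +∞, where C ≠ 0. Then for every continuous f : K → ℝ and every ε > 0 there exist L ∈ ℕ, coefficients c₁,…,c_L ∈ ℝ and multilinear polynomials p₁,…,p_L on ℝⁿ such that sup_{x ∈ K} |Σ_{l=1}^{L} c_l σ(p_l(x)) − f(x)| < ε. -/

import Mathlib

/-- A multilinear polynomial on `ℝⁿ`: `p(x) = Σ_{s ∈ {0,1}ⁿ} W_s ∏_{i : s i = 1} xᵢ`.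
These are exactly the contractions of an MPS whose site kernel maps are
`φ(xᵢ) = (xᵢ, 1)`. -/
def IsMultilinearPoly {n : ℕ} (p : (Fin n → ℝ) → ℝ) : Prop :=
  ∃ W : (Fin n → Bool) → ℝ,
    ∀ x : Fin n → ℝ,
      p x = ∑ s : Fin n → Bool, W s * ∏ i : Fin n, if s i then x i else 1

open Filter Finset

lemma ml_add {n : ℕ} {p q : (Fin n → ℝ) → ℝ} (hp : IsMultilinearPoly p)
    (hq : IsMultilinearPoly q) : IsMultilinearPoly (fun x => p x + q x) := by
  obtain ⟨W, hW⟩ := hp; obtain ⟨V, hV⟩ := hq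
  exact ⟨fun s => W s + V s, fun x => by
    simp [hW, hV, add_mul, Finset.sum_add_distrib]⟩

lemma ml_const {n : ℕ} (c : ℝ) : IsMultilinearPoly (fun _ : Fin n → ℝ => c) := by
  classical
  refine ⟨fun s => if s = (fun _ => false) then c else 0, fun x => ?_⟩
  rw [Finset.sum_eq_single (fun _ => false : Fin n → Bool)]
  · simp
  · intro b _ hb; simp [hb]
  · simp

lemma ml_coord_smul {n : ℕ} (a : ℝ) (i : Fin n) :
    IsMultilinearPoly (fun x => a * x i) := by
  classical
  refine ⟨fun s => if s = (fun j => decide (j = i)) then a else 0, fun x => ?_⟩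
  simp only []
  rw [Finset.sum_eq_single (fun j => decide (j = i) : Fin n → Bool)]
  · rw [if_pos rfl]
    congr 1
    rw [Finset.prod_eq_single i] <;> simp +contextual
  · intro b _ hb; simp [hb]
  · simp

lemma ml_sum {n : ℕ} {ι : Type*} (s : Finset ι) (F : ι → (Fin n → ℝ) → ℝ)
    (h : ∀ i ∈ s, IsMultilinearPoly (F i)) :
    IsMultilinearPoly (fun x => ∑ i ∈ s, F i x) := by
  classical
  induction s using Finset.induction with
  | empty => simpa using ml_const (n := n) 0
  | @insert j s hj ih =>
    simp only [Finset.sum_insert hj]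
    exact ml_add (h j (Finset.mem_insert_self j s))
      (ih fun i hi => h i (Finset.mem_insert_of_mem hi))

lemma ml_affine {n : ℕ} (a : Fin n → ℝ) (θ : ℝ) :
    IsMultilinearPoly (fun x => (∑ i, a i * x i) + θ) :=
  ml_add (ml_sum Finset.univ _ fun i _ => ml_coord_smul (a i) i) (ml_const θ)


def RepSig {n : ℕ} (σ : ℝ → ℝ) (F : (Fin n → ℝ) → ℝ) : Prop :=
  ∃ (L : ℕ) (c : Fin L → ℝ) (p : Fin L → (Fin n → ℝ) → ℝ),
    (∀ l, IsMultilinearPoly (p l)) ∧ ∀ x, F x = ∑ l, c l * σ (p l x)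

lemma rep_zero {n : ℕ} (σ : ℝ → ℝ) : RepSig σ (fun _ : Fin n → ℝ => 0) :=
  ⟨0, ![], ![], fun l => l.elim0, fun x => by simp⟩

lemma rep_add {n : ℕ} {σ : ℝ → ℝ} {F G : (Fin n → ℝ) → ℝ} (hF : RepSig σ F) (hG : RepSig σ G) :
    RepSig σ (fun x => F x + G x) := by
  obtain ⟨L1, c1, p1, h1, e1⟩ := hF
  obtain ⟨L2, c2, p2, h2, e2⟩ := hG
  refine ⟨L1 + L2, Fin.append c1 c2, Fin.append p1 p2, ?_, ?_⟩
  · intro l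
    induction l using Fin.addCases with
    | left i => simpa [Fin.append_left] using h1 i
    | right i => simpa [Fin.append_right] using h2 i
  · intro x
    simp only []
    rw [e1, e2, Fin.sum_univ_add]
    simp [Fin.append_left, Fin.append_right]

lemma rep_sum {n : ℕ} {σ : ℝ → ℝ} {ι : Type*} (s : Finset ι) (G : ι → (Fin n → ℝ) → ℝ)
    (h : ∀ j ∈ s, RepSig σ (G j)) : RepSig σ (fun x => ∑ j ∈ s, G j x) := by
  classical
  induction s using Finset.induction with
  | empty => simpa using rep_zero σ (n := n)
  | @insert j s hj ih =>
    simp only [Finset.sum_insert hj]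
    exact rep_add (h j (Finset.mem_insert_self j s))
      (ih fun i hi => h i (Finset.mem_insert_of_mem hi))


lemma one_dim (σ : ℝ → ℝ) (M : ℝ) (hM : ∀ t, |σ t| ≤ M) (C : ℝ) (hC : C ≠ 0)
    (hbot : Tendsto σ atBot (nhds 0)) (htop : Tendsto σ atTop (nhds C))
    (h : ℝ → ℝ) (hh : Continuous h) (R : ℝ) (hR : 0 < R) (ε : ℝ) (hε : 0 < ε) :
    ∃ (L : ℕ) (a b θ : Fin L → ℝ), ∀ t ∈ Set.Icc (-R) R,
      |(∑ l, a l * σ (b l * t + θ l)) - h t| < ε := by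
  classical
  have hM0 : 0 ≤ M := le_trans (abs_nonneg _) (hM 0)
  set Ca := |C| with hCadef
  have hCa0 : 0 < Ca := abs_pos.mpr hC
  set B := M + Ca with hBdef
  have hB0 : 0 < B := by positivity
  set ε₁ := ε / (8 * (1 + B / Ca)) with hε₁def
  have hε₁0 : 0 < ε₁ := by positivity
  -- uniform continuity on a slightly larger interval
  have hucont : UniformContinuousOn h (Set.Icc (-R - 1) (R + 1)) :=
    isCompact_Icc.uniformContinuousOn_of_continuous hh.continuousOn
  obtain ⟨δ, hδ0, hδ⟩ := (Metric.uniformContinuousOn_iff).mp hucont ε₁ hε₁0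
  -- the grid
  set T0 := min 1 (δ / 2) with hT0def
  have hT00 : 0 < T0 := lt_min one_pos (half_pos hδ0)
  set K : ℕ := ⌈2 * R / T0⌉₊ with hKdef
  have hKpos : 0 < K := Nat.ceil_pos.mpr (by positivity)
  set T := 2 * R / K with hTdef
  have hT0 : 0 < T := by positivity
  have hTle : T ≤ T0 := by
    rw [hTdef, div_le_iff₀ (by positivity)]
    calc 2 * R = 2 * R / T0 * T0 := by field_simp
    _ ≤ K * T0 := by
        have := Nat.le_ceil (2 * R / T0)
        exact mul_le_mul_of_nonneg_right (by exact_mod_cast this) hT00.le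
    _ = T0 * K := mul_comm _ _
  have hT1 : T ≤ 1 := hTle.trans (min_le_left _ _)
  have hTδ : T < δ := lt_of_le_of_lt (hTle.trans (min_le_right _ _)) (half_lt_self hδ0)
  have hKT : (K : ℝ) * T = 2 * R := by
    rw [hTdef]; field_simp
  -- grid points, jump locations, values, jump heights
  set s : ℕ → ℝ := fun k => -R + k * T with hsdef
  set ℓ : ℕ → ℝ := fun k => if k = 0 then -R - 1 else s k with hℓdef
  set v : ℕ → ℝ := fun k => h (s k) with hvdef
  set d : ℕ → ℝ := fun k => if k = 0 then v 0 / C else (v k - v (k - 1)) / C with hddef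
  have hsmem : ∀ k ≤ K, s k ∈ Set.Icc (-R) R := by
    intro k hk
    constructor
    · simp only [hsdef]
      nlinarith [mul_nonneg (Nat.cast_nonneg (α := ℝ) k) hT0.le]
    · simp only [hsdef]
      have : (k : ℝ) * T ≤ K * T :=
        mul_le_mul_of_nonneg_right (by exact_mod_cast hk) hT0.le
      nlinarith
  have hsmem' : ∀ k ≤ K, s k ∈ Set.Icc (-R - 1) (R + 1) := by
    intro k hk
    obtain ⟨h1, h2⟩ := hsmem k hk
    exact ⟨by linarith, by linarith⟩
  have hdk : ∀ k, 1 ≤ k → k ≤ K → |d k| ≤ ε₁ / Ca := by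
    intro k h1 hk
    have hne : d k = (v k - v (k - 1)) / C := by
      simp only [hddef]; rw [if_neg (by omega)]
    rw [hne, abs_div, ← hCadef]
    gcongr
    have hk1 : s k ∈ Set.Icc (-R - 1) (R + 1) := hsmem' k hk
    have hk2 : s (k - 1) ∈ Set.Icc (-R - 1) (R + 1) := hsmem' (k - 1) (by omega)
    have hdist : dist (s k) (s (k - 1)) < δ := by
      have hc : ((k - 1 : ℕ) : ℝ) = (k : ℝ) - 1 := by
        rw [Nat.cast_sub h1]; norm_num
      rw [Real.dist_eq]
      simp only [hsdef, hc]
      rw [show -R + (k : ℝ) * T - (-R + ((k : ℝ) - 1) * T) = T from by ring]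
      rw [abs_of_pos hT0]
      exact hTδ
    have := hδ _ hk1 _ hk2 hdist
    rw [Real.dist_eq] at this
    exact this.le
  
  set D := ∑ k ∈ Finset.range (K + 1), |d k| with hDdef
  have hD0 : 0 ≤ D := Finset.sum_nonneg fun k _ => abs_nonneg _
  set η := ε / (8 * (D + 1)) with hηdef
  have hη0 : 0 < η := by positivity
  obtain ⟨N₁, hN₁⟩ : ∃ N, ∀ u ≥ N, |σ u - C| ≤ η := by
    obtain ⟨N, hN⟩ := Filter.eventually_atTop.mp (Metric.tendsto_nhds.mp htop η hη0)
    exact ⟨N, fun u hu => by simpa [Real.dist_eq] using (hN u hu).le⟩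
  obtain ⟨N₂, hN₂⟩ : ∃ N, ∀ u ≤ N, |σ u| ≤ η := by
    obtain ⟨N, hN⟩ := Filter.eventually_atBot.mp (Metric.tendsto_nhds.mp hbot η hη0)
    exact ⟨N, fun u hu => by simpa [Real.dist_eq] using (hN u hu).le⟩
  set Λ := max 0 (max N₁ (-N₂)) with hΛdef
  set lam := Λ / T with hlamdef
  have hlam0 : 0 ≤ lam := div_nonneg (le_max_left _ _) hT0.le
  have hlamT : lam * T = Λ := div_mul_cancel₀ _ hT0.ne'
  have hΛ1 : N₁ ≤ Λ := le_trans (le_max_left _ _) (le_max_right _ _)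
  have hΛ2 : -Λ ≤ N₂ := by
    have : -N₂ ≤ Λ := le_trans (le_max_right _ _) (le_max_right _ _)
    linarith
  -- telescoping sum
  have telesc : ∀ mm, ∑ k ∈ Finset.range (mm + 1), d k = v mm / C := by
    intro mm
    induction mm with
    | zero => simp [hddef]
    | succ p ih =>
      rw [Finset.sum_range_succ, ih]
      have hne : d (p + 1) = (v (p + 1) - v p) / C := by
        simp only [hddef]; rw [if_neg (Nat.succ_ne_zero p)]; norm_num
      rw [hne, ← add_div]
      congr 1
      ring
  refine ⟨K + 1, fun l => d l, fun _ => lam, fun l => -(lam * ℓ l), ?_⟩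
  rintro t ⟨ht1, ht2⟩
  -- index of the active cell
  set u := (t + R) / T with hudef
  have hu0 : 0 ≤ u := div_nonneg (by linarith) hT0.le
  have huT : u * T = t + R := div_mul_cancel₀ _ hT0.ne'
  set m := ⌊u⌋₊ with hmdef
  have hmu : (m : ℝ) ≤ u := Nat.floor_le hu0
  have hum : u < m + 1 := Nat.lt_floor_add_one u
  have hmK : m ≤ K := by
    have huK : u ≤ (K : ℝ) := by
      rw [hudef, div_le_iff₀ hT0]
      linarith [hKT]
    calc m = ⌊u⌋₊ := rfl
    _ ≤ ⌊(K : ℝ)⌋₊ := Nat.floor_le_floor huK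
    _ = K := Nat.floor_natCast K
  
  set e : ℕ → ℝ := fun k => σ (lam * (t - ℓ k)) - (if k ≤ m then C else 0) with hedef
  clear_value Ca B ε₁ T0 T s ℓ v d D η Λ lam u m e
  have hind : ∑ k ∈ Finset.range (K + 1), d k * (if k ≤ m then C else 0) = v m := by
    have h1 : ∀ k, d k * (if k ≤ m then C else 0) = if k ≤ m then d k * C else 0 := by
      intro k; split <;> simp
    simp_rw [h1]
    rw [← Finset.sum_filter]
    have hfil : Finset.filter (fun k => k ≤ m) (Finset.range (K + 1)) =
        Finset.range (m + 1) := by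
      ext k; simp only [Finset.mem_filter, Finset.mem_range, Nat.lt_succ_iff]; omega
    rw [hfil, ← Finset.sum_mul, telesc m, div_mul_cancel₀ _ hC]
  have hsplit : (∑ k ∈ Finset.range (K + 1), d k * σ (lam * (t - ℓ k))) - h t
      = (∑ k ∈ Finset.range (K + 1), d k * e k) + (v m - h t) := by
    simp only [hedef, mul_sub]
    rw [Finset.sum_sub_distrib, hind]
    ring
  have hpart2 : |v m - h t| ≤ ε₁ := by
    have htsm1 : 0 ≤ t - s m := by
      have h' : (m : ℝ) * T ≤ u * T := mul_le_mul_of_nonneg_right hmu hT0.le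
      simp only [hsdef]; linarith [huT, h']
    have htsm2 : t - s m < T := by
      have h' : u * T < ((m : ℝ) + 1) * T := mul_lt_mul_of_pos_right hum hT0
      simp only [hsdef]; linarith [huT, h']
    have h1 := hsmem' m hmK
    have h2 : t ∈ Set.Icc (-R - 1) (R + 1) := ⟨by linarith, by linarith⟩
    have hdist : dist (s m) t < δ := by
      rw [Real.dist_eq, abs_sub_comm, abs_of_nonneg htsm1]
      linarith
    have := hδ _ h1 _ h2 hdist
    rw [Real.dist_eq] at this
    rw [hvdef]
    exact this.le
  have hgood : ∀ k ∈ Finset.range (K + 1), ¬ (|t - ℓ k| < T) → |e k| ≤ η := by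
    intro k hk hbad
    push_neg at hbad
    rcases le_abs.mp hbad with hpos | hneg
    · have hkm : k ≤ m := by
        rcases Nat.eq_zero_or_pos k with rfl | hk1
        · exact Nat.zero_le m
        · have hℓ : ℓ k = -R + k * T := by
            simp only [hℓdef, hsdef]; rw [if_neg (by omega)]
          have : (k : ℝ) ≤ u := by
            rw [hudef, le_div_iff₀ hT0]; rw [hℓ] at hpos; linarith
          exact hmdef ▸ Nat.le_floor this
      simp only [hedef]
      rw [if_pos hkm]
      apply hN₁
      calc N₁ ≤ Λ := hΛ1
      _ = lam * T := hlamT.symm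
      _ ≤ lam * (t - ℓ k) := mul_le_mul_of_nonneg_left hpos hlam0
    · have hk0 : k ≠ 0 := by
        rintro rfl
        have hℓ0 : ℓ 0 = -R - 1 := by simp [hℓdef]
        rw [hℓ0] at hneg
        have : -(t - (-R - 1)) ≤ -1 := by linarith
        linarith [hT00, hTle]
      have hℓ : ℓ k = -R + k * T := by
        simp only [hℓdef, hsdef]; rw [if_neg hk0]
      have hkm : ¬ (k ≤ m) := by
        have hku : u < (k : ℝ) := by
          rw [hudef, div_lt_iff₀ hT0]; rw [hℓ] at hneg; linarith
        intro hle
        have : (m : ℝ) ≤ u := hmu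
        have hkm' : (k : ℝ) ≤ (m : ℝ) := by exact_mod_cast hle
        linarith
      simp only [hedef]
      rw [if_neg hkm, sub_zero]
      apply hN₂
      calc lam * (t - ℓ k) ≤ lam * (-T) := mul_le_mul_of_nonneg_left (by linarith) hlam0
      _ = -(lam * T) := by ring
      _ = -Λ := by rw [hlamT]
      _ ≤ N₂ := hΛ2
  have hbadk : ∀ k ∈ Finset.range (K + 1), |t - ℓ k| < T → (1 ≤ k ∧ m ≤ k ∧ k ≤ m + 1) := by
    intro k hk hbad
    have hk0 : k ≠ 0 := by
      rintro rfl
      have hℓ0 : ℓ 0 = -R - 1 := by simp [hℓdef]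
      rw [hℓ0] at hbad
      rw [show t - (-R - 1) = t + R + 1 from by ring] at hbad
      rw [abs_of_nonneg (by linarith)] at hbad
      linarith [hT1]
    have hℓ : ℓ k = -R + k * T := by
      simp only [hℓdef, hsdef]; rw [if_neg hk0]
    rw [hℓ, abs_lt] at hbad
    obtain ⟨hb1, hb2⟩ := hbad
    have hg1 : (k : ℝ) - 1 < u := by rw [hudef, lt_div_iff₀ hT0]; linarith
    have hg2 : u < (k : ℝ) + 1 := by rw [hudef, div_lt_iff₀ hT0]; linarith
    refine ⟨by omega, ?_, ?_⟩
    · have h1 : (m : ℝ) < (k : ℝ) + 1 := lt_of_le_of_lt hmu hg2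
      have : m < k + 1 := by exact_mod_cast h1
      omega
    · have h1 : (k : ℝ) < (m : ℝ) + 2 := by linarith
      have : k < m + 2 := by exact_mod_cast h1
      omega
  have hbadsum : ∑ k ∈ Finset.filter (fun k => |t - ℓ k| < T) (Finset.range (K + 1)),
      |d k * e k| ≤ 2 * ((ε₁ / Ca) * B) := by
    have hsub : Finset.filter (fun k => |t - ℓ k| < T) (Finset.range (K + 1))
        ⊆ {m, m + 1} := by
      intro k hk
      rw [Finset.mem_filter] at hk
      obtain ⟨h1, h2, h3⟩ := hbadk k hk.1 hk.2
      simp only [Finset.mem_insert, Finset.mem_singleton]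
      omega
    have hcard : (Finset.filter (fun k => |t - ℓ k| < T) (Finset.range (K + 1))).card
        ≤ 2 := by
      refine le_trans (Finset.card_le_card hsub) ?_
      refine le_trans (Finset.card_insert_le _ _) ?_
      simp
    have hper : ∀ k ∈ Finset.filter (fun k => |t - ℓ k| < T) (Finset.range (K + 1)),
        |d k * e k| ≤ (ε₁ / Ca) * B := by
      intro k hk
      rw [Finset.mem_filter] at hk
      obtain ⟨h1, h2, h3⟩ := hbadk k hk.1 hk.2
      rw [abs_mul]
      have hd := hdk k h1 (Nat.lt_succ_iff.mp (Finset.mem_range.mp hk.1))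
      have he : |e k| ≤ B := by
        simp only [hedef]
        refine le_trans (abs_sub _ _) ?_
        rw [hBdef]
        refine add_le_add (hM _) ?_
        split
        · exact le_of_eq hCadef.symm
        · simp [hCa0.le]
      exact mul_le_mul hd he (abs_nonneg _) (le_of_lt (div_pos hε₁0 hCa0))
    refine le_trans (Finset.sum_le_card_nsmul _ _ _ hper) ?_
    rw [nsmul_eq_mul]
    apply mul_le_mul_of_nonneg_right ?_
      (mul_nonneg (div_pos hε₁0 hCa0).le hB0.le)
    exact_mod_cast hcard
  have hgoodsum : ∑ k ∈ Finset.filter (fun k => ¬ (|t - ℓ k| < T)) (Finset.range (K + 1)),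
      |d k * e k| ≤ D * η := by
    refine le_trans (Finset.sum_le_sum (f := fun k => |d k * e k|)
      (g := fun k => |d k| * η) ?_) ?_
    · intro k hk
      rw [Finset.mem_filter] at hk
      show |d k * e k| ≤ |d k| * η
      rw [abs_mul]
      exact mul_le_mul_of_nonneg_left (hgood k hk.1 hk.2) (abs_nonneg _)
    · refine le_trans (Finset.sum_le_sum_of_subset_of_nonneg (Finset.filter_subset _ _)
        (fun k _ _ => mul_nonneg (abs_nonneg _) hη0.le)) ?_
      rw [hDdef, Finset.sum_mul]
  have habs : |∑ k ∈ Finset.range (K + 1), d k * e k| ≤ 2 * ((ε₁ / Ca) * B) + D * η := by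
    refine le_trans (Finset.abs_sum_le_sum_abs _ _) ?_
    rw [← Finset.sum_filter_add_sum_filter_not (Finset.range (K + 1))
      (fun k => |t - ℓ k| < T) (fun k => |d k * e k|)]
    exact add_le_add hbadsum hgoodsum
  -- numeric bookkeeping
  have f1 : D * η ≤ ε / 8 := by
    have hD1 : (0:ℝ) < D + 1 := by linarith
    have e1 : (D + 1) * η = ε / 8 := by
      rw [hηdef]
      field_simp
    calc D * η ≤ (D + 1) * η := mul_le_mul_of_nonneg_right (by linarith) hη0.le
    _ = ε / 8 := e1
  have f2 : 2 * ((ε₁ / Ca) * B) + ε₁ ≤ ε / 2 := by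
    have hq0 : 0 < B / Ca := div_pos hB0 hCa0
    have h82 : (0:ℝ) < 8 * (1 + B / Ca) := by linarith
    have hcomb : 2 * ((ε₁ / Ca) * B) + ε₁ = ε₁ * (2 * (B / Ca) + 1) := by
      field_simp
    have e2 : ε₁ * (8 * (1 + B / Ca)) = ε := by
      rw [hε₁def]
      field_simp
    have h3 : 0 ≤ ε₁ * (B / Ca) := mul_nonneg hε₁0.le hq0.le
    linarith [hcomb, e2, h3, hε₁0.le]
  have hsum0 : (∑ l : Fin (K + 1), d l.val * σ (lam * t + -(lam * ℓ l.val)))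
      = ∑ k ∈ Finset.range (K + 1), d k * σ (lam * (t - ℓ k)) := by
    rw [Fin.sum_univ_eq_sum_range (fun k => d k * σ (lam * t + -(lam * ℓ k))) (K + 1)]
    refine Finset.sum_congr rfl fun k _ => ?_
    congr 2
    ring
  simp only []
  rw [hsum0, hsplit]
  calc |(∑ k ∈ Finset.range (K + 1), d k * e k) + (v m - h t)|
      ≤ |∑ k ∈ Finset.range (K + 1), d k * e k| + |v m - h t| := abs_add_le _ _
  _ ≤ (2 * ((ε₁ / Ca) * B) + D * η) + ε₁ := add_le_add habs hpart2
  _ < ε := by linarith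



/-- universal approximation by activated MPS on compact sets. For any
nonempty compact `K ⊆ ℝⁿ` and any continuous bounded sigmoidal `σ` with `σ → 0` at `-∞`
and `σ → C ≠ 0` at `+∞`, every continuous `f : K → ℝ` is uniformly approximated within
`ε` by some `x ↦ Σ_l c_l σ(p_l x)` with `p_l` multilinear polynomials. -/
theorem activated_mps_dense_on_compact (n : ℕ) (K : Set (Fin n → ℝ))
    (hK : IsCompact K) (hKne : K.Nonempty) (σ : ℝ → ℝ)
    (hσc : Continuous σ) (hσb : ∃ M, ∀ t, |σ t| ≤ M) (C : ℝ) (hC : C ≠ 0)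
    (hbot : Filter.Tendsto σ Filter.atBot (nhds 0))
    (htop : Filter.Tendsto σ Filter.atTop (nhds C))
    (f : (Fin n → ℝ) → ℝ) (hf : ContinuousOn f K)
    (ε : ℝ) (hε : 0 < ε) :
    ∃ (L : ℕ) (c : Fin L → ℝ) (p : Fin L → (Fin n → ℝ) → ℝ),
      (∀ l, IsMultilinearPoly (p l)) ∧
      ∀ x ∈ K, |(∑ l : Fin L, c l * σ (p l x)) - f x| < ε := by
  classical
  obtain ⟨M, hM⟩ := hσb
  haveI : CompactSpace K := isCompact_iff_compactSpace.mp hK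
  -- the submonoid of exponentials of linear forms
  let S : Submonoid C(K, ℝ) :=
    { carrier := {g | ∃ w : Fin n → ℝ,
        ∀ x : K, g x = Real.exp (∑ i, w i * (x : Fin n → ℝ) i)},
      mul_mem' := by
        rintro g1 g2 ⟨w1, h1⟩ ⟨w2, h2⟩
        refine ⟨w1 + w2, fun x => ?_⟩
        simp only [ContinuousMap.mul_apply, h1 x, h2 x, ← Real.exp_add, Pi.add_apply]
        rw [← Finset.sum_add_distrib]
        congr 1
        refine Finset.sum_congr rfl fun i _ => ?_
        ring
      one_mem' := ⟨0, fun x => by simp⟩ }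
  let A : Subalgebra ℝ C(K, ℝ) := Algebra.adjoin ℝ (S : Set C(K, ℝ))
  have hsep : A.SeparatesPoints := by
    intro x y hxy
    have hex : ∃ i, (x : Fin n → ℝ) i ≠ (y : Fin n → ℝ) i := by
      by_contra hcon
      push_neg at hcon
      exact hxy (Subtype.ext (funext hcon))
    obtain ⟨i, hi⟩ := hex
    set g : C(K, ℝ) :=
      ⟨fun x : K => Real.exp ((x : Fin n → ℝ) i), by
        exact Real.continuous_exp.comp ((continuous_apply i).comp continuous_subtype_val)⟩
      with hgdef
    have hgS : g ∈ S := by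
      refine ⟨fun j => if j = i then 1 else 0, fun z => ?_⟩
      rw [Finset.sum_eq_single i]
      · simp [hgdef]
      · intro b _ hb; simp [hb]
      · simp
    refine ⟨_, ⟨g, Algebra.subset_adjoin hgS, rfl⟩, ?_⟩
    simp only [hgdef, ContinuousMap.coe_mk]
    intro hcon
    exact hi (Real.exp_injective hcon)
  obtain ⟨g0, hg0⟩ := ContinuousMap.exists_mem_subalgebra_near_continuous_of_separatesPoints
    A hsep (K.restrict f) hf.restrict (ε / 2) (by positivity)
  have hg0span : (g0 : C(K, ℝ)) ∈ Submodule.span ℝ (S : Set C(K, ℝ)) := by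
    have h1 : (g0 : C(K, ℝ)) ∈ Subalgebra.toSubmodule A := g0.2
    rw [Algebra.adjoin_eq_span, Submonoid.closure_eq] at h1
    exact h1
  obtain ⟨m, c, gs, hsum⟩ := Submodule.mem_span_set'.mp hg0span
  choose w hw using fun j : Fin m => (gs j).2
  -- geometry of K
  obtain ⟨r, hr⟩ := hK.isBounded.subset_closedBall 0
  have hr0 : 0 ≤ r := by
    obtain ⟨x₀, hx₀⟩ := hKne
    have := hr hx₀
    rw [Metric.mem_closedBall] at this
    exact le_trans dist_nonneg this
  have hcoord : ∀ x ∈ K, ∀ i, |x i| ≤ r := by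
    intro x hx i
    have h1 := hr hx
    rw [Metric.mem_closedBall, dist_zero_right] at h1
    calc |x i| = ‖x i‖ := (Real.norm_eq_abs _).symm
    _ ≤ ‖x‖ := norm_le_pi_norm x i
    _ ≤ r := h1
  set R : Fin m → ℝ := fun j => (∑ i, |w j i| * r) + 1 with hRdef
  have hR0 : ∀ j, 0 < R j := by
    intro j
    have : 0 ≤ ∑ i, |w j i| * r :=
      Finset.sum_nonneg fun i _ => mul_nonneg (abs_nonneg _) hr0
    simp only [hRdef]
    linarith
  have hRK : ∀ j, ∀ x ∈ K, (∑ i, w j i * x i) ∈ Set.Icc (-(R j)) (R j) := by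
    intro j x hx
    rw [Set.mem_Icc, ← abs_le]
    refine le_trans (Finset.abs_sum_le_sum_abs _ _) ?_
    have h1 : ∀ i ∈ Finset.univ, |w j i * x i| ≤ |w j i| * r := by
      intro i _
      rw [abs_mul]
      exact mul_le_mul_of_nonneg_left (hcoord x hx i) (abs_nonneg _)
    refine le_trans (Finset.sum_le_sum h1) ?_
    simp only [hRdef]
    linarith
  set cs := ∑ j, |c j| with hcsdef
  have hcs0 : 0 ≤ cs := Finset.sum_nonneg fun j _ => abs_nonneg _
  set ε' := ε / (2 * (cs + 1)) with hε'def
  have hε'0 : 0 < ε' := by positivity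
  choose L a b θ hab using fun j : Fin m =>
    one_dim σ M hM C hC hbot htop Real.exp Real.continuous_exp (R j) (hR0 j) ε' hε'0
  set G : Fin m → (Fin n → ℝ) → ℝ := fun j x =>
    ∑ l : Fin (L j), (c j * a j l) * σ (b j l * (∑ i, w j i * x i) + θ j l) with hGdef
  have hrepG : ∀ j ∈ (Finset.univ : Finset (Fin m)), RepSig σ (G j) := by
    intro j _
    refine ⟨L j, fun l => c j * a j l,
      fun l x => b j l * (∑ i, w j i * x i) + θ j l, ?_, fun x => rfl⟩
    intro l
    have heq : (fun x : Fin n → ℝ => (∑ i, (b j l * w j i) * x i) + θ j l)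
        = fun x => b j l * (∑ i, w j i * x i) + θ j l := by
      funext x
      rw [Finset.mul_sum]
      congr 1
      exact Finset.sum_congr rfl fun i _ => mul_assoc _ _ _
    show IsMultilinearPoly fun x => b j l * (∑ i, w j i * x i) + θ j l
    rw [← heq]
    exact ml_affine (fun i => b j l * w j i) (θ j l)
  obtain ⟨L0, c0, p0, hml0, heq0⟩ := rep_sum Finset.univ G hrepG
  refine ⟨L0, c0, p0, hml0, ?_⟩
  intro x hx
  rw [← heq0 x]
  set xK : K := ⟨x, hx⟩ with hxKdef
  have hg0x : (g0 : C(K, ℝ)) xK = ∑ j, c j * (gs j : C(K, ℝ)) xK := by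
    rw [← hsum]
    simp
  have hGj : ∀ j, |G j x - c j * Real.exp (∑ i, w j i * x i)| ≤ |c j| * ε' := by
    intro j
    have h1 := hab j _ (hRK j x hx)
    have hGx : G j x
        = c j * (∑ l, a j l * σ (b j l * (∑ i, w j i * x i) + θ j l)) := by
      simp only [hGdef]
      rw [Finset.mul_sum]
      exact Finset.sum_congr rfl fun l _ => mul_assoc _ _ _
    rw [hGx, ← mul_sub, abs_mul]
    exact mul_le_mul_of_nonneg_left h1.le (abs_nonneg _)
  have hbig : |(∑ j, G j x) - (g0 : C(K, ℝ)) xK| ≤ cs * ε' := by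
    rw [hg0x, ← Finset.sum_sub_distrib]
    refine le_trans (Finset.abs_sum_le_sum_abs _ _) ?_
    have h2 : ∀ j ∈ (Finset.univ : Finset (Fin m)),
        |G j x - c j * (gs j : C(K, ℝ)) xK| ≤ |c j| * ε' := by
      intro j _
      rw [hw j xK]
      exact hGj j
    refine le_trans (Finset.sum_le_sum h2) ?_
    rw [hcsdef, Finset.sum_mul]
  have hsmall : |(g0 : C(K, ℝ)) xK - f x| < ε / 2 := by
    have := hg0 xK
    rw [Real.norm_eq_abs] at this
    exact this
  have hcsε : cs * ε' ≤ ε / 2 := by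
    have h3 : cs * ε' ≤ (cs + 1) * ε' :=
      mul_le_mul_of_nonneg_right (by linarith) hε'0.le
    have e3 : (cs + 1) * ε' = ε / 2 := by
      rw [hε'def]
      field_simp
    linarith
  have htri : |(∑ j, G j x) - f x|
      ≤ |(∑ j, G j x) - (g0 : C(K, ℝ)) xK| + |(g0 : C(K, ℝ)) xK - f x| := by
    rw [show (∑ j, G j x) - f x
        = ((∑ j, G j x) - (g0 : C(K, ℝ)) xK) + ((g0 : C(K, ℝ)) xK - f x) from by ring]
    exact abs_add_le _ _
  linarith [hbig, hsmall, htri, hcsε]
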